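/- arXiv:1505.05353 — 2 statements merged into one kernel-verified Lean document; each statement's English description precedes it below -/
import Mathlib

section
/- Let w ≠ 1 be an element of the Coxeter group W admitting a unique reduced expression, i.e. there is exactly one list over the index type B that is a reduced word for w. Then w has exactly one left descent and exactly one right descent. Consequently, the sets C_s = {w ∈ C : ℓ(ws) < ℓ(w)}, for s ranging over the simple reflections, form a partition of the set C of nontrivial elements with a unique reduced expression. -/
open CoxeterSystem

/-- `w` admits a unique reduced expression: there is exactly one list over `B` that is a
reduced word for `w`. -/
def HasUniqueReducedWord {B : Type} {M : CoxeterMatrix B} {W : Type*} [Group W]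
    (cs : CoxeterSystem M W) (w : W) : Prop :=
  ∃! l : List B, cs.wordProd l = w ∧ l.length = cs.length w

/-- The set `C` of nontrivial elements of `W` with a unique reduced expression. -/
def uniqExprSet {B : Type} {M : CoxeterMatrix B} {W : Type*} [Group W]
    (cs : CoxeterSystem M W) : Set W :=
  { w | w ≠ 1 ∧ HasUniqueReducedWord cs w }

/-- The set `C_s = {w ∈ C : ℓ(ws) < ℓ(w)}` for a simple reflection indexed by `i`. -/
def uniqExprCell {B : Type} {M : CoxeterMatrix B} {W : Type*} [Group W]
    (cs : CoxeterSystem M W) (i : B) : Set W :=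
  { w | w ∈ uniqExprSet cs ∧ cs.IsRightDescent w i }

/-- A nontrivial element with a unique reduced word has a unique right descent. -/
lemma uniq_rightDescent {B : Type} {M : CoxeterMatrix B} {W : Type*} [Group W]
    (cs : CoxeterSystem M W) {w : W} (hw : w ≠ 1) (hu : HasUniqueReducedWord cs w) :
    ∃! i : B, cs.IsRightDescent w i := by
  obtain ⟨l, ⟨hlp, hll⟩, huniq⟩ := hu
  obtain ⟨i, hi⟩ := cs.exists_rightDescent_of_ne_one hw
  refine ⟨i, hi, ?_⟩
  -- any right descent j gives a reduced word ending in j, which must be `l`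
  have key : ∀ j : B, cs.IsRightDescent w j → ∃ l' : List B, l' ++ [j] = l := by
    intro j hj
    obtain ⟨l', hl'len, hl'prod⟩ := cs.exists_reduced_word (w * cs.simple j)
    refine ⟨l', huniq (l' ++ [j]) ⟨?_, ?_⟩⟩
    · rw [cs.wordProd_append, cs.wordProd_singleton, ← hl'prod,
        mul_assoc, cs.simple_mul_simple_self, mul_one]
    · rw [List.length_append, List.length_singleton,
        ← (hl'len : cs.length (cs.wordProd l') = l'.length), ← hl'prod,
        (cs.isRightDescent_iff).mp hj]
  intro j hj
  obtain ⟨l₁, h₁⟩ := key j hj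
  obtain ⟨l₂, h₂⟩ := key i hi
  have := congrArg List.getLast? (h₁.trans h₂.symm)
  simpa using this

lemma uniq_leftDescent {B : Type} {M : CoxeterMatrix B} {W : Type*} [Group W]
    (cs : CoxeterSystem M W) {w : W} (hw : w ≠ 1) (hu : HasUniqueReducedWord cs w) :
    ∃! i : B, cs.IsLeftDescent w i := by
  obtain ⟨l, ⟨hlp, hll⟩, huniq⟩ := hu
  obtain ⟨i, hi⟩ := cs.exists_leftDescent_of_ne_one hw
  refine ⟨i, hi, ?_⟩
  have key : ∀ j : B, cs.IsLeftDescent w j → ∃ l' : List B, j :: l' = l := by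
    intro j hj
    obtain ⟨l', hl'len, hl'prod⟩ := cs.exists_reduced_word (cs.simple j * w)
    refine ⟨l', huniq (j :: l') ⟨?_, ?_⟩⟩
    · rw [cs.wordProd_cons, ← hl'prod, ← mul_assoc, cs.simple_mul_simple_self, one_mul]
    · rw [List.length_cons, ← (hl'len : cs.length (cs.wordProd l') = l'.length), ← hl'prod,
        (cs.isLeftDescent_iff).mp hj]
  intro j hj
  obtain ⟨l₁, h₁⟩ := key j hj
  obtain ⟨l₂, h₂⟩ := key i hi
  have := congrArg List.head? (h₁.trans h₂.symm)
  simpa using this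

/-- A nontrivial element with a unique reduced expression has exactly one left
descent and exactly one right descent; consequently the sets `C_s` form a partition of `C`. -/
theorem uniqExpr_unique_descents_and_partition {B : Type} {M : CoxeterMatrix B} {W : Type*}
    [Group W] (cs : CoxeterSystem M W) :
    (∀ w ∈ uniqExprSet cs,
      (∃! i : B, cs.IsLeftDescent w i) ∧ (∃! i : B, cs.IsRightDescent w i)) ∧
    (∀ w ∈ uniqExprSet cs, ∃! i : B, w ∈ uniqExprCell cs i) ∧
    (⋃ i : B, uniqExprCell cs i) = uniqExprSet cs := by
  refine ⟨fun w hw => ⟨uniq_leftDescent cs hw.1 hw.2, uniq_rightDescent cs hw.1 hw.2⟩,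
    fun w hw => ?_, ?_⟩
  · obtain ⟨i, hi, huniq⟩ := uniq_rightDescent cs hw.1 hw.2
    exact ⟨i, ⟨hw, hi⟩, fun j hj => huniq j hj.2⟩
  · ext w
    simp only [Set.mem_iUnion]
    constructor
    · rintro ⟨i, hi, -⟩; exact hi
    · intro hw
      obtain ⟨i, hi, -⟩ := uniq_rightDescent cs hw.1 hw.2
      exact ⟨i, hw, hi⟩
end

section
/- Assume the Coxeter system (W, S) is irreducible, i.e. its Coxeter graph is connected. For any simple reflection s, the graph Γ_s — with vertex set C_s, where distinct x, y ∈ C_s are adjacent if and only if y = t·x for some simple reflection t — is a tree (a connected acyclic simple graph). -/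
open CoxeterSystem Real

namespace GammaAux

variable {B : Type} (M : CoxeterMatrix B)

noncomputable def kk (a b : B) : ℝ := -Real.cos (Real.pi / (M a b))

lemma kk_diag (a : B) : kk M a a = 1 := by
  simp [kk, M.diagonal a]

lemma kk_symm (a b : B) : kk M a b = kk M b a := by
  rw [kk, kk, M.symmetric]

noncomputable def lf (a : B) : (B →₀ ℝ) →ₗ[ℝ] ℝ :=
  Finsupp.linearCombination ℝ (fun b => kk M a b)

lemma lf_single (a b : B) (r : ℝ) : lf M a (Finsupp.single b r) = r * kk M a b := by
  simp [lf, Finsupp.linearCombination_single, smul_eq_mul]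

noncomputable def sig (a : B) : Module.End ℝ (B →₀ ℝ) :=
  LinearMap.id - (2:ℝ) • (lf M a).smulRight (Finsupp.single a 1)

lemma sig_apply (a : B) (v : B →₀ ℝ) :
    sig M a v = v - (2 * lf M a v) • Finsupp.single a (1:ℝ) := by
  simp [sig, smul_smul]

lemma sig_single_self (a : B) : sig M a (Finsupp.single a (1:ℝ)) = -Finsupp.single a 1 := by
  rw [sig_apply, lf_single, kk_diag, mul_one, mul_one, two_smul]
  abel

lemma lf_sig (a : B) (v : B →₀ ℝ) : lf M a (sig M a v) = -lf M a v := by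
  rw [sig_apply, map_sub, map_smul, lf_single, kk_diag]
  ring_nf

lemma sig_sig (a : B) (v : B →₀ ℝ) : sig M a (sig M a v) = v := by
  rw [sig_apply M a (sig M a v), lf_sig, sig_apply]
  rw [mul_neg, neg_smul]
  abel

lemma sig_fix {a : B} {v : B →₀ ℝ} (h : lf M a v = 0) : sig M a v = v := by
  rw [sig_apply, h, mul_zero, zero_smul, sub_zero]

lemma dihedral_rel {a b : B} (hab : a ≠ b) (hm : 2 ≤ M a b) :
    (sig M a * sig M b) ^ (M a b) = 1 := by
  set m : ℕ := M a b with hmdef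
  have hm0 : (m : ℝ) ≠ 0 := by positivity
  set θ : ℝ := Real.pi / m with hθdef
  set c : ℝ := Real.cos θ with hcdef
  have hθpos : 0 < θ := by positivity
  have hm2 : (2:ℝ) ≤ (m:ℝ) := by exact_mod_cast hm
  have hθlt : θ < Real.pi := by
    rw [hθdef, div_lt_iff₀ (by positivity)]
    nlinarith [Real.pi_pos]
  have hsin : Real.sin θ ≠ 0 := ne_of_gt (Real.sin_pos_of_pos_of_lt_pi hθpos hθlt)
  have hsinpos : 0 < Real.sin θ := Real.sin_pos_of_pos_of_lt_pi hθpos hθlt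
  have hc2 : c ^ 2 < 1 := by
    have h1 : Real.sin θ ^ 2 + c ^ 2 = 1 := Real.sin_sq_add_cos_sq θ
    nlinarith
  have hkab : kk M a b = -c := by rw [kk, hcdef, hθdef, hmdef]
  have hkba : kk M b a = -c := by rw [kk_symm, hkab]
  set ea : B →₀ ℝ := Finsupp.single a 1 with headef
  set eb : B →₀ ℝ := Finsupp.single b 1 with hebdef
  set S : Module.End ℝ (B →₀ ℝ) := sig M a * sig M b with hSdef
  have hlfa_eb : lf M a eb = -c := by rw [hebdef, lf_single, one_mul, hkab]
  have hlfb_ea : lf M b ea = -c := by rw [headef, lf_single, one_mul, hkba]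
  have hlfa_ea : lf M a ea = 1 := by rw [headef, lf_single, one_mul, kk_diag]
  have hlfb_eb : lf M b eb = 1 := by rw [hebdef, lf_single, one_mul, kk_diag]
  have hsig_a_eb : sig M a eb = eb + (2*c) • ea := by
    rw [sig_apply, hlfa_eb, ← headef, mul_neg, neg_smul, sub_neg_eq_add]
  have hsig_b_ea : sig M b ea = ea + (2*c) • eb := by
    rw [sig_apply, hlfb_ea, ← hebdef, mul_neg, neg_smul, sub_neg_eq_add]
  have hSea : S ea = (4*c^2-1) • ea + (2*c) • eb := by
    rw [hSdef, Module.End.mul_apply, hsig_b_ea, map_add, map_smul, hsig_a_eb]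
    have : sig M a ea = -ea := sig_single_self M a
    rw [this, smul_add, smul_smul]
    module
  have hSeb : S eb = (-(2*c)) • ea + (-1:ℝ) • eb := by
    have hb : sig M b eb = -eb := sig_single_self M b
    rw [hSdef, Module.End.mul_apply, hb, map_neg, hsig_a_eb]
    module
  -- the trig sequence
  set w : ℤ → ℝ := fun n => Real.sin (n * θ) with hwdef
  have hw1 : w 1 = Real.sin θ := by simp [hwdef]
  have hwrec : ∀ k : ℤ, w (k + 2) = 2 * c * w (k + 1) - w k := by
    intro k
    have e1 : ((k + 2 : ℤ) : ℝ) * θ = ((k+1 : ℤ) : ℝ) * θ + θ := by push_cast; ring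
    have e2 : ((k : ℤ) : ℝ) * θ = ((k+1 : ℤ) : ℝ) * θ - θ := by push_cast; ring
    simp only [hwdef, e1, e2, Real.sin_add, Real.sin_sub]
    rw [hcdef]
    ring
  have key : ∀ n : ℕ, (w 1) • (S ^ n) ea = w (2*n+1) • ea + w (2*n) • eb ∧
      (w 1) • (S ^ n) eb = (-w (2*n)) • ea + (-w (2*n-1)) • eb := by
    intro n
    induction n with
    | zero =>
      have h0 : w 0 = 0 := by simp [hwdef]
      have hm1 : w (-1) = -w 1 := by
        simp only [hwdef]
        push_cast
        rw [neg_mul, Real.sin_neg, one_mul]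
      constructor
      · simp only [pow_zero, Module.End.one_apply, Nat.cast_zero, mul_zero, zero_add]
        rw [h0, zero_smul, add_zero]
      · simp only [pow_zero, Module.End.one_apply, Nat.cast_zero, mul_zero, zero_sub]
        rw [h0, hm1, neg_zero, zero_smul, neg_neg, zero_add]
    | succ n ih =>
      obtain ⟨iha, ihb⟩ := ih
      have hpow : ∀ v : B →₀ ℝ, (S ^ (n+1)) v = S ((S ^ n) v) := by
        intro v
        rw [pow_succ', Module.End.mul_apply]
      have ha2 : w (2*((n:ℤ)+1)+1) = (4*c^2-1) * w (2*(n:ℤ)+1) - 2*c * w (2*(n:ℤ)) := by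
        have e1 : (2*((n:ℤ)+1)+1) = (2*(n:ℤ)+1)+2 := by ring
        have e2 : (2*(n:ℤ)+1+1) = 2*(n:ℤ)+2 := by ring
        rw [e1, hwrec, e2, hwrec]
        ring
      have hb2 : w (2*((n:ℤ)+1)) = 2*c * w (2*(n:ℤ)+1) - w (2*(n:ℤ)) := by
        have r1 := hwrec (2*(n:ℤ))
        have e1 : (2*((n:ℤ)+1)) = 2*(n:ℤ)+2 := by ring
        rw [e1, r1]
      have hc2' : w (2*((n:ℤ)+1)-1) = w (2*(n:ℤ)+1) := by
        have e : (2*((n:ℤ)+1)-1) = 2*(n:ℤ)+1 := by ring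
        rw [e]
      constructor
      · rw [hpow, ← map_smul, iha, map_add, map_smul, map_smul, hSea, hSeb]
        push_cast
        rw [ha2, hb2]
        module
      · have hd : w (2*(n:ℤ)-1) = 2*c*w (2*(n:ℤ)) - w (2*(n:ℤ)+1) := by
          have e1 : (2*(n:ℤ)+1) = (2*(n:ℤ)-1)+2 := by ring
          have e2 : (2*(n:ℤ)-1+1) = 2*(n:ℤ) := by ring
          rw [e1, hwrec, e2]
          ring
        rw [hpow, ← map_smul, ihb, map_add, map_smul, map_smul, hSea, hSeb]
        push_cast
        rw [hc2', hb2, hd]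
        module
  -- values at n = m
  have h2m : w (2*m) = 0 := by
    have : ((2*m : ℤ) : ℝ) * θ = 2 * Real.pi := by
      push_cast
      rw [hθdef]
      field_simp
    simp only [hwdef, this, Real.sin_two_pi]
  have h2m1 : w (2*m+1) = w 1 := by
    have : ((2*m+1 : ℤ) : ℝ) * θ = θ + 2 * Real.pi := by
      push_cast
      rw [hθdef]
      field_simp
      ring
    simp only [hwdef, this, Real.sin_add_two_pi]
    norm_num
  have h2m1' : w (2*m-1) = -w 1 := by
    have : ((2*m-1 : ℤ) : ℝ) * θ = 2 * Real.pi - θ := by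
      push_cast
      rw [hθdef]
      field_simp
    simp only [hwdef, this, Real.sin_two_pi_sub]
    norm_num
  have hw1ne : w 1 ≠ 0 := by rw [hw1]; exact hsin
  have hSmea : (S ^ m) ea = ea := by
    have := (key m).1
    rw [h2m, h2m1, zero_smul, add_zero] at this
    exact smul_right_injective _ hw1ne this
  have hSmeb : (S ^ m) eb = eb := by
    have := (key m).2
    rw [h2m, h2m1', neg_zero, zero_smul, zero_add, neg_neg] at this
    exact smul_right_injective _ hw1ne this
  -- now prove S ^ m = 1 on every vector
  apply LinearMap.ext
  intro v
  set α : ℝ := lf M a v with hα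
  set β : ℝ := lf M b v with hβ
  set D : ℝ := 1 - c^2 with hD
  have hDne : D ≠ 0 := by rw [hD]; nlinarith
  set x : ℝ := (α + c*β)/D with hx
  set y : ℝ := (β + c*α)/D with hy
  set u : B →₀ ℝ := v - x • ea - y • eb with hu
  have hua : lf M a u = 0 := by
    rw [hu, map_sub, map_sub, map_smul, map_smul, hlfa_ea, hlfa_eb, ← hα]
    simp only [smul_eq_mul]
    rw [hx, hy]
    field_simp
    ring
  have hub : lf M b u = 0 := by
    rw [hu, map_sub, map_sub, map_smul, map_smul, hlfb_ea, hlfb_eb, ← hβ]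
    simp only [smul_eq_mul]
    rw [hx, hy]
    field_simp
    ring
  have hSu : S u = u := by
    rw [hSdef, Module.End.mul_apply, sig_fix M hub, sig_fix M hua]
  have hSnu : ∀ k : ℕ, (S ^ k) u = u := by
    intro k
    induction k with
    | zero => simp
    | succ n ih => rw [pow_succ, Module.End.mul_apply, hSu, ih]
  have hv : v = u + x • ea + y • eb := by rw [hu]; abel
  rw [Module.End.one_apply, hv, map_add, map_add, map_smul, map_smul, hSnu m, hSmea, hSmeb]


variable {W : Type*} [Group W]

lemma sig_liftable : M.IsLiftable (sig M) := by
  intro a b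
  rcases eq_or_ne a b with rfl | hab
  · rw [M.diagonal a, pow_one]
    apply LinearMap.ext
    intro v
    rw [Module.End.mul_apply, sig_sig, Module.End.one_apply]
  · rcases Nat.lt_or_ge (M a b) 2 with h2 | h2
    · interval_cases h : M.M a b
      · rw [pow_zero]
      · exact absurd h (M.off_diagonal a b hab)
    · exact dihedral_rel M hab h2

lemma simple_injective (cs : CoxeterSystem M W) : Function.Injective cs.simple := by
  intro i j hij
  by_contra hne
  have h := congrArg (cs.lift ⟨sig M, sig_liftable M⟩) hij
  rw [cs.lift_apply_simple, cs.lift_apply_simple] at h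
  have h2 := congrArg (fun φ : Module.End ℝ (B →₀ ℝ) => (φ (Finsupp.single i 1)) i) h
  rw [sig_single_self] at h2
  rw [sig_apply] at h2
  simp only [Finsupp.coe_neg, Pi.neg_apply, Finsupp.single_eq_same, Finsupp.coe_sub,
    Pi.sub_apply, Finsupp.coe_smul, Pi.smul_apply, smul_eq_mul] at h2
  rw [Finsupp.single_eq_of_ne hne] at h2
  norm_num at h2

end GammaAux


open CoxeterSystem

/-- The graph `Γ_s`: vertices are the elements of `C_s`, and distinct `x, y` are adjacent iff
`y = t·x` for some simple reflection `t`. -/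
def gammaGraph {B : Type} {M : CoxeterMatrix B} {W : Type*} [Group W]
    (cs : CoxeterSystem M W) (i : B) : SimpleGraph (uniqExprCell cs i) where
  Adj x y := x ≠ y ∧ ∃ t : B, (y : W) = cs.simple t * (x : W)
  symm := by
    constructor
    rintro x y ⟨hxy, t, ht⟩
    exact ⟨hxy.symm, t, by rw [ht, cs.simple_mul_simple_cancel_left]⟩
  loopless := by
    constructor
    rintro x ⟨hxx, -⟩
    exact hxx rfl

/-- The Coxeter graph of `(W, S)`: vertices are the elements of `B`, and `s ≠ t` are adjacent
iff `M s t ≥ 3`. -/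
def coxeterGraph {B : Type} (M : CoxeterMatrix B) : SimpleGraph B where
  Adj s t := s ≠ t ∧ 3 ≤ M s t
  symm := by
    constructor
    rintro s t ⟨h1, h2⟩
    exact ⟨h1.symm, by rwa [M.symmetric t s]⟩
  loopless := by
    constructor
    rintro s ⟨hss, -⟩
    exact hss rfl


section Combinatorial

open CoxeterSystem

variable {B : Type} {M : CoxeterMatrix B} {W : Type*} [Group W] (cs : CoxeterSystem M W)

lemma GammaAux.uniq_left_descent {w : W} (hw : HasUniqueReducedWord cs w) {a b : B}
    (ha : cs.IsLeftDescent w a) (hb : cs.IsLeftDescent w b) : a = b := by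
  obtain ⟨l, -, hluniq⟩ := hw
  have key : ∀ t : B, cs.IsLeftDescent w t → l.head? = some t := by
    intro t ht
    obtain ⟨lt, hlen, hprod⟩ := cs.exists_reduced_word (cs.simple t * w)
    have hp : cs.wordProd (t :: lt) = w := by
      rw [cs.wordProd_cons, ← hprod, cs.simple_mul_simple_cancel_left]
    have hlen2 : (t :: lt).length = cs.length w := by
      rw [cs.isLeftDescent_iff] at ht
      simp only [List.length_cons, ← hlen.eq, ← hprod]
      omega
    have := hluniq (t :: lt) ⟨hp, hlen2⟩
    rw [← this]
    rfl
  have h1 := key a ha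
  have h2 := key b hb
  rw [h1] at h2
  exact Option.some_injective B h2

lemma GammaAux.parent_mem {i : B} {w : W} (hw : w ∈ uniqExprCell cs i)
    (h2 : 2 ≤ cs.length w) :
    ∃ t : B, cs.IsLeftDescent w t ∧ cs.simple t * w ∈ uniqExprCell cs i ∧
      cs.length (cs.simple t * w) + 1 = cs.length w := by
  obtain ⟨⟨hne1, hu⟩, hdesc⟩ := hw
  obtain ⟨l, ⟨hprod, hlen⟩, huniq⟩ := hu
  obtain ⟨l', hl'len, hl'prod⟩ := cs.exists_reduced_word (w * cs.simple i)
  have hldecomp : l = l' ++ [i] := by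
    refine (huniq (l' ++ [i]) ⟨?_, ?_⟩).symm
    · rw [cs.wordProd_append, cs.wordProd_singleton, ← hl'prod,
        cs.simple_mul_simple_cancel_right]
    · have hdi := cs.isRightDescent_iff.mp hdesc
      simp only [List.length_append, List.length_singleton, ← hl'len.eq, ← hl'prod]
      omega
  obtain ⟨t, lt, rfl⟩ : ∃ t lt, l = t :: lt := by
    cases l with
    | nil => simp at hlen; omega
    | cons t lt => exact ⟨t, lt, rfl⟩
  have hw' : cs.simple t * w = cs.wordProd lt := by
    rw [← hprod, cs.wordProd_cons, cs.simple_mul_simple_cancel_left]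
  have hltlen : lt.length + 1 = cs.length w := by simpa using hlen
  have hlt_red : cs.length (cs.wordProd lt) = lt.length := by
    have hle := cs.length_wordProd_le lt
    have hcase := cs.length_simple_mul (cs.wordProd lt) t
    rw [← cs.wordProd_cons, hprod] at hcase
    omega
  have hdesc_t : cs.IsLeftDescent w t := by
    show cs.length (cs.simple t * w) < cs.length w
    rw [hw', hlt_red]
    omega
  refine ⟨t, hdesc_t, ⟨⟨?_, ?_⟩, ?_⟩, ?_⟩
  · intro hone
    have h0 : cs.length (cs.simple t * w) = 0 := by rw [hone, cs.length_one]
    rw [hw', hlt_red] at h0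
    omega
  · refine ⟨lt, ⟨hw'.symm, ?_⟩, ?_⟩
    · rw [hw', hlt_red]
    · rintro l₂ ⟨hp₂, hl₂⟩
      have hlen₂ : l₂.length = lt.length := by rw [hl₂, hw', hlt_red]
      have hcons : t :: l₂ = t :: lt := by
        refine huniq (t :: l₂) ⟨?_, ?_⟩
        · rw [cs.wordProd_cons, hp₂, cs.simple_mul_simple_cancel_left]
        · simp only [List.length_cons, hlen₂]
          omega
      exact List.cons_injective hcons
  · cases l' with
    | nil =>
      exfalso
      have hl1 : lt.length + 1 = 1 := by
        have := congrArg List.length hldecomp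
        simpa using this
      omega
    | cons t' l'' =>
      have hlt : lt = l'' ++ [i] := by
        have := hldecomp
        simp only [List.cons_append, List.cons.injEq] at this
        exact this.2
      show cs.length (cs.simple t * w * cs.simple i) < cs.length (cs.simple t * w)
      rw [hw']
      have hprod'' : cs.wordProd lt * cs.simple i = cs.wordProd l'' := by
        rw [hlt, cs.wordProd_append, cs.wordProd_singleton,
          cs.simple_mul_simple_cancel_right]
      rw [hprod'', hlt_red, hlt]
      simp only [List.length_append, List.length_singleton]
      have hle := cs.length_wordProd_le l''
      omega
  · rw [hw', hlt_red]
    omega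

lemma GammaAux.cell_length_one {i : B} {w : W} (hw : w ∈ uniqExprCell cs i)
    (h1 : cs.length w = 1) : w = cs.simple i := by
  obtain ⟨j, rfl⟩ := cs.length_eq_one_iff.mp h1
  have hd : cs.length (cs.simple j * cs.simple i) < 1 := by
    have := hw.2
    rwa [CoxeterSystem.IsRightDescent, h1] at this
  have h0 : cs.simple j * cs.simple i = 1 := cs.length_eq_zero_iff.mp (by omega)
  have h' := congrArg (fun x => x * cs.simple i) h0
  simpa [cs.simple_mul_simple_cancel_right] using h'

lemma GammaAux.root_mem (hinj : Function.Injective cs.simple) (i : B) :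
    cs.simple i ∈ uniqExprCell cs i := by
  have hlen1 : cs.length (cs.simple i) = 1 := cs.length_simple i
  refine ⟨⟨?_, ⟨[i], ⟨cs.wordProd_singleton i, by simp [hlen1]⟩, ?_⟩⟩, ?_⟩
  · intro h
    rw [h, cs.length_one] at hlen1
    omega
  · rintro l ⟨hp, hl⟩
    rw [hlen1] at hl
    obtain ⟨j, rfl⟩ := List.length_eq_one_iff.mp hl
    rw [cs.wordProd_singleton] at hp
    rw [hinj hp]
  · show cs.length (cs.simple i * cs.simple i) < cs.length (cs.simple i)
    rw [cs.simple_mul_simple_self, cs.length_one, hlen1]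
    omega

end Combinatorial

/-- If the Coxeter system `(W, S)` is irreducible (its Coxeter graph is
connected), then for any simple reflection `s` the graph `Γ_s` is a tree. -/
theorem gammaGraph_isTree {B : Type} {M : CoxeterMatrix B} {W : Type*} [Group W]
    (cs : CoxeterSystem M W) (hirr : (coxeterGraph M).Connected) (i : B) :
    (gammaGraph cs i).IsTree := by
  have hinj := GammaAux.simple_injective M cs
  have hroot := GammaAux.root_mem cs hinj i
  set root : uniqExprCell cs i := ⟨cs.simple i, hroot⟩ with hrootdef
  have hadj_ne : ∀ x y : uniqExprCell cs i, (gammaGraph cs i).Adj x y →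
      cs.length (x : W) ≠ cs.length (y : W) := by
    rintro x y ⟨-, t, ht⟩
    rw [ht]
    exact fun h => (cs.length_simple_mul_ne (x : W) t) h.symm
  have hdown : ∀ u x y : uniqExprCell cs i, (gammaGraph cs i).Adj u x →
      (gammaGraph cs i).Adj u y → cs.length (x:W) < cs.length (u:W) →
      cs.length (y:W) < cs.length (u:W) → x = y := by
    rintro u x y ⟨-, t, ht⟩ ⟨-, t', ht'⟩ hx hy
    have hdx : cs.IsLeftDescent (u:W) t := by
      show cs.length (cs.simple t * (u:W)) < cs.length (u:W)
      rw [← ht]; exact hx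
    have hdy : cs.IsLeftDescent (u:W) t' := by
      show cs.length (cs.simple t' * (u:W)) < cs.length (u:W)
      rw [← ht']; exact hy
    have htt := GammaAux.uniq_left_descent cs u.2.1.2 hdx hdy
    apply Subtype.ext
    rw [ht, ht', htt]
  constructor
  · -- connected
    have hreach : ∀ n (v : uniqExprCell cs i), cs.length (v:W) = n →
        (gammaGraph cs i).Reachable v root := by
      intro n
      induction n using Nat.strong_induction_on with
      | _ n ih =>
        intro v hv
        rcases Nat.lt_or_ge n 2 with hn | hn
        · have hn0 : n ≠ 0 := by
            intro h
            rw [h] at hv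
            exact v.2.1.1 (cs.length_eq_zero_iff.mp hv)
          have hv1 : (v : W) = cs.simple i :=
            GammaAux.cell_length_one cs v.2 (by omega)
          have : v = root := Subtype.ext hv1
          rw [this]
        · obtain ⟨t, hld, hmem, hlen⟩ := GammaAux.parent_mem cs v.2 (hv ▸ hn)
          have hadj : (gammaGraph cs i).Adj v ⟨cs.simple t * (v:W), hmem⟩ := by
            refine ⟨?_, t, rfl⟩
            intro h
            have h2 := congrArg (fun x : uniqExprCell cs i => cs.length (x:W)) h
            simp only at h2
            omega
          exact hadj.reachable.trans
            (ih (n-1) (by omega) ⟨cs.simple t * (v:W), hmem⟩ (by simp only; omega))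
    haveI : Nonempty (uniqExprCell cs i) := ⟨root⟩
    exact ⟨fun u v => (hreach _ u rfl).trans (hreach _ v rfl).symm⟩
  · -- acyclic
    intro v c hc
    haveI : DecidableEq (↥(uniqExprCell cs i)) := Classical.decEq _
    obtain ⟨u, humem', hmax'⟩ := Finset.exists_max_image c.support.toFinset
      (fun x : ↥(uniqExprCell cs i) => cs.length (x:W))
      (by rw [List.toFinset_nonempty_iff]; exact c.support_ne_nil)
    have humem : u ∈ c.support := List.mem_toFinset.mp humem'
    have hmax : ∀ x, x ∈ c.support → cs.length (x:W) ≤ cs.length (u:W) :=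
      fun x hx => hmax' x (List.mem_toFinset.mpr hx)
    have hc' := hc.rotate humem
    set c' := c.rotate u humem with hc'def
    have hsub : ∀ x, x ∈ c'.support → x ∈ c.support := by
      intro x hx
      rw [c'.support_eq_cons] at hx
      rcases List.mem_cons.mp hx with rfl | hx
      · exact humem
      · have hx2 : x ∈ c.support.tail :=
          (SimpleGraph.Walk.support_rotate c u humem).mem_iff.mp hx
        rw [c.support_eq_cons]
        exact List.mem_cons_of_mem _ hx2
    obtain ⟨b, hadjb, q, hq⟩ := SimpleGraph.Walk.not_nil_iff.mp hc'.not_nil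
    rw [hq, SimpleGraph.Walk.cons_isCycle_iff] at hc'
    obtain ⟨d, hadjd, q2, hq2⟩ :=
      SimpleGraph.Walk.exists_eq_cons_of_ne hadjb.ne q.reverse
    have hud_edge : s(u, d) ∈ q.edges := by
      have h1 : s(u, d) ∈ q.reverse.edges := by
        rw [hq2, SimpleGraph.Walk.edges_cons]
        exact List.mem_cons_self
      rwa [SimpleGraph.Walk.edges_reverse, List.mem_reverse] at h1
    have hbd : b ≠ d := by
      rintro rfl
      exact hc'.2 hud_edge
    have hdq : d ∈ q.support := by
      have h1 : d ∈ q.reverse.support := by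
        rw [hq2, SimpleGraph.Walk.support_cons]
        exact List.mem_cons_of_mem _ q2.start_mem_support
      rwa [SimpleGraph.Walk.support_reverse, List.mem_reverse] at h1
    have hbq : b ∈ q.support := q.start_mem_support
    have hmemq : ∀ x, x ∈ q.support → x ∈ c.support := by
      intro x hx
      apply hsub
      rw [hq, SimpleGraph.Walk.support_cons]
      exact List.mem_cons_of_mem _ hx
    have hlb : cs.length (b:W) < cs.length (u:W) :=
      lt_of_le_of_ne (hmax b (hmemq b hbq)) (fun h => hadj_ne u b hadjb h.symm)
    have hld : cs.length (d:W) < cs.length (u:W) :=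
      lt_of_le_of_ne (hmax d (hmemq d hdq)) (fun h => hadj_ne u d hadjd h.symm)
    exact hbd (hdown u b d hadjb hadjd hlb hld)
end
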